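/- arXiv:2303.17191 — 2 statements merged into one kernel-verified Lean document; each statement's English description precedes it below -/
import Mathlib

section
/- The map sending (a, b_1, …, b_k) with a ∈ ℤ, b_1 < ⋯ < b_k ∈ ℤ, k ≥ 0, to the group element σ^a ∘ f_{b_k} ∘ ⋯ ∘ f_{b_1} is a bijection onto G. -/
open Filter Topology

noncomputable section

/-- The shift `s ↦ s - 1` on the one-point compactification `ℤ ∪ {∞}`, fixing `∞`. -/
def shiftOP : Equiv.Perm (OnePoint ℤ) :=
  (Equiv.optionCongr (Equiv.subRight (1 : ℤ)) : Equiv.Perm (Option ℤ))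

/-- The phase space `X = (ℤ ∪ {∞}) × {0,1}`. -/
abbrev LampX : Type := OnePoint ℤ × Bool

/-- The transposition `f` swapping `(0,1)` and `(0,0)`. -/
def lampF : Equiv.Perm LampX :=
  haveI : DecidableEq LampX := Classical.decEq _
  Equiv.swap (((0 : ℤ) : OnePoint ℤ), true) (((0 : ℤ) : OnePoint ℤ), false)

/-- The shift `σ` on `X`, decrementing the integer coordinate. -/
def lampSigma : Equiv.Perm LampX := (shiftOP).prodCongr (Equiv.refl Bool)

/-- `f_n = σ^{-n} ∘ f ∘ σ^n`. -/
def lampfn (n : ℤ) : Equiv.Perm LampX := lampSigma ^ (-n) * lampF * lampSigma ^ n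

/-- The Lamplighter group `G = ⟨f, σ⟩`. -/
def lampG : Subgroup (Equiv.Perm LampX) := Subgroup.closure {lampF, lampSigma}

/-- For `l = [b_1, …, b_k]`, the composition `f_{b_k} ∘ ⋯ ∘ f_{b_1}`. -/
def lampProd (l : List ℤ) : Equiv.Perm LampX := (l.reverse.map lampfn).prod

open OnePoint

lemma lampSigma_apply_coe (s : ℤ) (b : Bool) :
    lampSigma ((s : OnePoint ℤ), b) = (((s - 1 : ℤ) : OnePoint ℤ), b) := rfl
lemma lampSigma_inv_apply_coe (s : ℤ) (b : Bool) :
    lampSigma⁻¹ ((s : OnePoint ℤ), b) = (((s + 1 : ℤ) : OnePoint ℤ), b) := rfl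
lemma lampSigma_apply_infty (b : Bool) : lampSigma ((∞ : OnePoint ℤ), b) = (∞, b) := rfl
lemma lampSigma_inv_apply_infty (b : Bool) : lampSigma⁻¹ ((∞ : OnePoint ℤ), b) = (∞, b) := rfl

lemma lampSigma_zpow_coe (a : ℤ) : ∀ (s : ℤ) (b : Bool),
    (lampSigma ^ a) ((s : OnePoint ℤ), b) = (((s - a : ℤ) : OnePoint ℤ), b) := by
  induction a using Int.induction_on with
  | zero => intro s b; simp
  | succ n ih =>
      intro s b
      rw [show ((n : ℤ) + 1) = 1 + n by ring, zpow_add, zpow_one, Equiv.Perm.mul_apply,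
        ih, lampSigma_apply_coe]
      norm_num; ring
  | pred n ih =>
      intro s b
      rw [show (-(n : ℤ) - 1) = -1 + -n by ring, zpow_add, zpow_neg_one, Equiv.Perm.mul_apply,
        ih, lampSigma_inv_apply_coe]
      norm_num; ring

lemma lampSigma_zpow_infty (a : ℤ) (b : Bool) :
    (lampSigma ^ a) ((∞ : OnePoint ℤ), b) = (∞, b) := by
  induction a using Int.induction_on with
  | zero => simp
  | succ n ih =>
      rw [show ((n : ℤ) + 1) = 1 + n by ring, zpow_add, zpow_one, Equiv.Perm.mul_apply, ih,
        lampSigma_apply_infty]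
  | pred n ih =>
      rw [show (-(n : ℤ) - 1) = -1 + -n by ring, zpow_add, zpow_neg_one, Equiv.Perm.mul_apply, ih,
        lampSigma_inv_apply_infty]

lemma lampF_apply_coe (s : ℤ) (b : Bool) :
    lampF ((s : OnePoint ℤ), b) = ((s : OnePoint ℤ), if s = 0 then !b else b) := by
  letI := Classical.decEq LampX
  unfold lampF
  by_cases h : s = 0
  · subst h; cases b <;> simp [Equiv.swap_apply_def]
  · rw [Equiv.swap_apply_of_ne_of_ne] <;>
      · simp [Prod.ext_iff, OnePoint.coe_eq_coe, h]

lemma lampF_apply_infty (b : Bool) : lampF ((∞ : OnePoint ℤ), b) = (∞, b) := by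
  letI := Classical.decEq LampX
  unfold lampF
  rw [Equiv.swap_apply_of_ne_of_ne] <;> simp [Prod.ext_iff]

lemma lampfn_apply_coe (n : ℤ) (s : ℤ) (b : Bool) :
    lampfn n ((s : OnePoint ℤ), b) = ((s : OnePoint ℤ), if s = n then !b else b) := by
  have hsn : s - n = 0 ↔ s = n := sub_eq_zero
  rw [lampfn, Equiv.Perm.mul_apply, Equiv.Perm.mul_apply, lampSigma_zpow_coe,
    lampF_apply_coe]
  rw [lampSigma_zpow_coe]
  congr 2
  · ring
  · simp [hsn]

lemma lampfn_apply_infty (n : ℤ) (b : Bool) :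
    lampfn n ((∞ : OnePoint ℤ), b) = (∞, b) := by
  rw [lampfn, Equiv.Perm.mul_apply, Equiv.Perm.mul_apply, lampSigma_zpow_infty,
    lampF_apply_infty, lampSigma_zpow_infty]

lemma lampProd_nil : lampProd [] = 1 := rfl

lemma lampProd_cons (x : ℤ) (l : List ℤ) :
    lampProd (x :: l) = lampProd l * lampfn x := by
  simp [lampProd, List.reverse_cons]

lemma lampProd_apply_infty (l : List ℤ) (b : Bool) :
    lampProd l ((∞ : OnePoint ℤ), b) = (∞, b) := by
  induction l with
  | nil => rfl
  | cons x l ih =>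
      rw [lampProd_cons, Equiv.Perm.mul_apply, lampfn_apply_infty, ih]

lemma lampProd_apply_coe (l : List ℤ) (hl : l.Nodup) (s : ℤ) (b : Bool) :
    lampProd l ((s : OnePoint ℤ), b) = ((s : OnePoint ℤ), xor (decide (s ∈ l)) b) := by
  induction l generalizing b with
  | nil => simp [lampProd_nil]
  | cons x l ih =>
      rw [lampProd_cons, Equiv.Perm.mul_apply, lampfn_apply_coe,
        ih (List.Nodup.of_cons hl)]
      by_cases h : s = x
      · subst h
        have : s ∉ l := (List.nodup_cons.mp hl).1
        simp [this]
      · simp [h]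

lemma key_apply_coe (a : ℤ) (l : List ℤ) (hl : l.Nodup) (s : ℤ) (b : Bool) :
    (lampSigma ^ a * lampProd l) ((s : OnePoint ℤ), b)
      = (((s - a : ℤ) : OnePoint ℤ), xor (decide (s ∈ l)) b) := by
  rw [Equiv.Perm.mul_apply, lampProd_apply_coe l hl, lampSigma_zpow_coe]

lemma key_apply_infty (a : ℤ) (l : List ℤ) (b : Bool) :
    (lampSigma ^ a * lampProd l) ((∞ : OnePoint ℤ), b) = (∞, b) := by
  rw [Equiv.Perm.mul_apply, lampProd_apply_infty, lampSigma_zpow_infty]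


lemma sorted_nodup {l : List ℤ} (h : l.Pairwise (· < ·)) : l.Nodup := h.nodup

lemma lamp_inj :
    Function.Injective
      (fun p : ℤ × {l : List ℤ // l.Pairwise (· < ·)} => lampSigma ^ p.1 * lampProd p.2.1) := by
  rintro ⟨a, l, hl⟩ ⟨a', l', hl'⟩ h
  simp only at h
  have hpt : ∀ (s : ℤ) (b : Bool),
      (((s - a : ℤ) : OnePoint ℤ), xor (decide (s ∈ l)) b)
        = (((s - a' : ℤ) : OnePoint ℤ), xor (decide (s ∈ l')) b) := by
    intro s b
    rw [← key_apply_coe a l hl.nodup, ← key_apply_coe a' l' hl'.nodup, h]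
  have ha : a = a' := by
    have := (Prod.ext_iff.mp (hpt 0 false)).1
    rw [OnePoint.coe_eq_coe] at this
    omega
  have hmem : ∀ s : ℤ, s ∈ l ↔ s ∈ l' := by
    intro s
    have := (Prod.ext_iff.mp (hpt s false)).2
    simpa using this
  have hll : l = l' := by
    haveI : IsAntisymm ℤ (· < ·) := ⟨fun a b h1 h2 => absurd h2 (lt_asymm h1)⟩
    exact List.Perm.eq_of_pairwise (fun a b _ _ h1 h2 => absurd h2 (lt_asymm h1)) hl hl'
      ((List.perm_ext_iff_of_nodup hl.nodup hl'.nodup).mpr hmem)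
  subst ha; subst hll; rfl


lemma perm_ext (g h : Equiv.Perm LampX)
    (hc : ∀ (s : ℤ) (b : Bool), g ((s : OnePoint ℤ), b) = h ((s : OnePoint ℤ), b))
    (hi : ∀ b : Bool, g ((∞ : OnePoint ℤ), b) = h (∞, b)) : g = h := by
  apply Equiv.ext
  rintro ⟨x, b⟩
  cases x with
  | infty => exact hi b
  | coe s => exact hc s b

lemma lamp_mul_eq (a c : ℤ) (l₁ l₂ : List ℤ) (h₁ : l₁.Nodup) (h₂ : l₂.Nodup) :
    (lampSigma ^ a * lampProd l₁) * (lampSigma ^ c * lampProd l₂)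
      = lampSigma ^ (a + c) *
        lampProd ((symmDiff (l₁.toFinset.image (· + c)) l₂.toFinset).sort (· ≤ ·)) := by
  set m := (symmDiff (l₁.toFinset.image (· + c)) l₂.toFinset).sort (· ≤ ·) with hm
  have hmem : ∀ s : ℤ, s ∈ m ↔ ((s - c ∈ l₁ ∧ s ∉ l₂) ∨ (s ∈ l₂ ∧ s - c ∉ l₁)) := by
    intro s
    rw [hm, Finset.mem_sort, Finset.mem_symmDiff]
    simp only [Finset.mem_image, List.mem_toFinset]
    constructor
    · rintro (⟨⟨x, hx, rfl⟩, h⟩ | ⟨h, h'⟩)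
      · exact Or.inl ⟨by simpa using hx, h⟩
      · exact Or.inr ⟨h, fun hc' => h' ⟨_, hc', by ring⟩⟩
    · rintro (⟨h, h'⟩ | ⟨h, h'⟩)
      · exact Or.inl ⟨⟨s - c, h, by ring⟩, h'⟩
      · exact Or.inr ⟨h, fun ⟨x, hx, hxe⟩ => h' (by rw [← hxe]; simpa using hx)⟩
  have hmn : m.Nodup := Finset.sort_nodup _ _
  apply perm_ext
  · intro s b
    rw [Equiv.Perm.mul_apply, key_apply_coe c l₂ h₂, key_apply_coe a l₁ h₁,
      key_apply_coe (a + c) m hmn]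
    refine Prod.ext ?_ ?_
    · rw [OnePoint.coe_eq_coe]; ring
    · simp only
      by_cases hx : s - c ∈ l₁ <;> by_cases hy : s ∈ l₂ <;>
        simp [hmem s, hx, hy]
  · intro b
    rw [Equiv.Perm.mul_apply, key_apply_infty, key_apply_infty, key_apply_infty]

lemma lamp_inv_eq (a : ℤ) (l : List ℤ) (hl : l.Nodup) :
    (lampSigma ^ a * lampProd l)⁻¹
      = lampSigma ^ (-a) * lampProd ((l.toFinset.image (· - a)).sort (· ≤ ·)) := by
  set m := (l.toFinset.image (· - a)).sort (· ≤ ·) with hm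
  have hmem : ∀ s : ℤ, s ∈ m ↔ s + a ∈ l := by
    intro s
    rw [hm, Finset.mem_sort]
    simp only [Finset.mem_image, List.mem_toFinset]
    constructor
    · rintro ⟨x, hx, rfl⟩; simpa using hx
    · intro h; exact ⟨s + a, h, by ring⟩
  have hmn : m.Nodup := Finset.sort_nodup _ _
  symm
  apply eq_inv_of_mul_eq_one_right
  apply perm_ext
  · intro s b
    rw [Equiv.Perm.mul_apply, key_apply_coe (-a) m hmn, key_apply_coe a l hl,
      Equiv.Perm.one_apply]
    refine Prod.ext ?_ ?_
    · rw [OnePoint.coe_eq_coe]; ring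
    · simp only
      rw [show s - -a = s + a by ring]
      by_cases hx : s + a ∈ l <;> simp [hmem s, hx]
  · intro b
    rw [Equiv.Perm.mul_apply, key_apply_infty, key_apply_infty, Equiv.Perm.one_apply]

lemma lamp_range :
    Set.range
      (fun p : ℤ × {l : List ℤ // l.Pairwise (· < ·)} => lampSigma ^ p.1 * lampProd p.2.1)
      = (lampG : Set (Equiv.Perm LampX)) := by
  ext g
  simp only [Set.mem_range, SetLike.mem_coe]
  constructor
  · rintro ⟨⟨a, l, hl⟩, rfl⟩
    simp only
    have hσ : lampSigma ∈ lampG :=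
      Subgroup.subset_closure (by simp [Set.mem_insert_iff])
    have hf : lampF ∈ lampG :=
      Subgroup.subset_closure (by simp [Set.mem_insert_iff])
    have hfn : ∀ n : ℤ, lampfn n ∈ lampG := fun n =>
      mul_mem (mul_mem (zpow_mem hσ _) hf) (zpow_mem hσ _)
    refine mul_mem (zpow_mem hσ _) ?_
    apply Subgroup.list_prod_mem
    intro x hx
    simp only [List.mem_map] at hx
    obtain ⟨n, _, rfl⟩ := hx
    exact hfn n
  · intro hg
    refine Subgroup.closure_induction ?_ ?_ ?_ ?_ hg
    · rintro x (rfl | rfl)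
      · refine ⟨(0, ⟨[0], by simp⟩), ?_⟩
        simp [lampProd_cons, lampProd_nil, lampfn]
      · exact ⟨(1, ⟨[], List.Pairwise.nil⟩), by simp [lampProd_nil]⟩
    · exact ⟨(0, ⟨[], List.Pairwise.nil⟩), by simp [lampProd_nil]⟩
    · rintro x y _ _ ⟨⟨a, l₁, hl₁⟩, rfl⟩ ⟨⟨c, l₂, hl₂⟩, rfl⟩
      refine ⟨(a + c, ⟨(symmDiff (l₁.toFinset.image (· + c)) l₂.toFinset).sort (· ≤ ·),
        (Finset.sortedLT_sort _).pairwise⟩), ?_⟩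
      exact (lamp_mul_eq a c l₁ l₂ hl₁.nodup hl₂.nodup).symm
    · rintro x _ ⟨⟨a, l, hl⟩, rfl⟩
      refine ⟨(-a, ⟨(l.toFinset.image (· - a)).sort (· ≤ ·), (Finset.sortedLT_sort _).pairwise⟩), ?_⟩
      exact (lamp_inv_eq a l hl.nodup).symm

/-- The map `(a, b_1, …, b_k) ↦ σ^a ∘ f_{b_k} ∘ ⋯ ∘ f_{b_1}` (with `a ∈ ℤ` and
`b_1 < ⋯ < b_k ∈ ℤ`) is a bijection onto the Lamplighter group `G = ⟨f, σ⟩`. -/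
theorem lamplighter_normal_form_bijective :
    Function.Injective
      (fun p : ℤ × {l : List ℤ // l.Pairwise (· < ·)} => lampSigma ^ p.1 * lampProd p.2.1) ∧
    Set.range
      (fun p : ℤ × {l : List ℤ // l.Pairwise (· < ·)} => lampSigma ^ p.1 * lampProd p.2.1)
      = (lampG : Set (Equiv.Perm LampX)) := by
  exact ⟨lamp_inj, lamp_range⟩

end
end

section
/- For the Lamplighter group action on X and any right Følner sequence (F_n') in G, the empirical measures μ_n^x = (1/|F_n'|) Σ_{g∈F_n'} δ_{gx} converge weak* to (1/2)δ_{(∞,1)} + (1/2)δ_{(∞,0)} for every x ∈ X other than the two fixed points (∞,1) and (∞,0). -/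
open Filter Topology

noncomputable section

open scoped symmDiff

/-! ### Auxiliary machinery -/

/-- Extract the integer from a point of `OnePoint ℤ` (junk value `0` at `∞`). -/
def lampToZ : OnePoint ℤ → ℤ := fun o => Option.getD o 0

@[simp] lemma lampToZ_coe (z : ℤ) : lampToZ (z : OnePoint ℤ) = z := rfl

lemma lampSigma_apply (m : ℤ) (ε : Bool) :
    lampSigma ((m : OnePoint ℤ), ε) = ((↑(m - 1) : OnePoint ℤ), ε) := rfl

lemma lampSigma_inv_apply (m : ℤ) (ε : Bool) :
    lampSigma⁻¹ ((m : OnePoint ℤ), ε) = ((↑(m + 1) : OnePoint ℤ), ε) := by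
  have := lampSigma_apply (m + 1) ε
  simp only [add_sub_cancel_right] at this
  rw [← this, ← Equiv.Perm.mul_apply, inv_mul_cancel, Equiv.Perm.one_apply]

lemma lampSigma_zpow_apply (j : ℤ) : ∀ (m : ℤ) (ε : Bool),
    (lampSigma ^ j) ((m : OnePoint ℤ), ε) = ((↑(m - j) : OnePoint ℤ), ε) := by
  induction j using Int.induction_on with
  | zero => intro m ε; simp
  | succ n ih =>
      intro m ε
      rw [zpow_add_one, Equiv.Perm.mul_apply, lampSigma_apply, ih]
      have : m - 1 - (n : ℤ) = m - ((n : ℤ) + 1) := by ring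
      rw [this]
  | pred n ih =>
      intro m ε
      rw [zpow_sub_one, Equiv.Perm.mul_apply, lampSigma_inv_apply, ih]
      have : m + 1 - (-(n : ℤ)) = m - (-(n : ℤ) - 1) := by ring
      rw [this]

lemma lampF_apply (m : ℤ) (ε : Bool) :
    lampF ((m : OnePoint ℤ), ε) = ((m : OnePoint ℤ), xor (decide (m = 0)) ε) := by
  letI : DecidableEq LampX := Classical.decEq _
  show (Equiv.swap _ _) _ = _
  rw [Equiv.swap_apply_def]
  by_cases hm : m = 0
  · subst hm; cases ε <;> simp [Prod.ext_iff]
  · have h0 : ((m : OnePoint ℤ)) ≠ ((0 : ℤ) : OnePoint ℤ) := by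
      simp [OnePoint.coe_eq_coe, hm]
    simp [Prod.ext_iff, h0, hm]

lemma lampfn_apply (b m : ℤ) (ε : Bool) :
    lampfn b ((m : OnePoint ℤ), ε) = ((m : OnePoint ℤ), xor (decide (m = b)) ε) := by
  unfold lampfn
  rw [Equiv.Perm.mul_apply, Equiv.Perm.mul_apply, lampSigma_zpow_apply, lampF_apply,
    lampSigma_zpow_apply]
  have h1 : m - b - -b = m := by ring
  have h2 : decide (m - b = 0) = decide (m = b) := by
    simp [Int.sub_eq_zero]
  rw [h1, h2]

/-- Shift part of a lamplighter group element. -/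
def lampAg (g : Equiv.Perm LampX) : ℤ := -(lampToZ (g (((0 : ℤ) : OnePoint ℤ), true)).1)

/-- Lamp-flip indicator of a lamplighter group element at position `m`. -/
def lampCg (g : Equiv.Perm LampX) (m : ℤ) : Bool := !((g ((m : OnePoint ℤ), true)).2)

lemma lampF_mem : lampF ∈ lampG := Subgroup.subset_closure (by simp)

lemma lampSigma_mem : lampSigma ∈ lampG := Subgroup.subset_closure (by simp)

lemma lampSigma_zpow_mem (j : ℤ) : lampSigma ^ j ∈ lampG := zpow_mem lampSigma_mem j

lemma lampSigma_pow_mem (j : ℕ) : lampSigma ^ j ∈ lampG := pow_mem lampSigma_mem j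

lemma lampfn_mem (b : ℤ) : lampfn b ∈ lampG :=
  mul_mem (mul_mem (lampSigma_zpow_mem _) lampF_mem) (lampSigma_zpow_mem _)

/-- Normal form of the action of a lamplighter group element on integer points. -/
lemma lampG_norm {g : Equiv.Perm LampX} (hg : g ∈ lampG) (m : ℤ) (ε : Bool) :
    g ((m : OnePoint ℤ), ε) = ((↑(m - lampAg g) : OnePoint ℤ), xor (lampCg g m) ε) := by
  have key : ∃ a : ℤ, ∃ c : ℤ → Bool, ∀ (m : ℤ) (ε : Bool),
      g ((m : OnePoint ℤ), ε) = ((↑(m - a) : OnePoint ℤ), xor (c m) ε) := by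
    induction hg using Subgroup.closure_induction with
    | mem x hx =>
        rcases hx with rfl | rfl
        · exact ⟨0, fun m => decide (m = 0), fun m ε => by
            rw [lampF_apply]; norm_num⟩
        · exact ⟨1, fun _ => false, fun m ε => by rw [lampSigma_apply]; simp⟩
    | one => exact ⟨0, fun _ => false, fun m ε => by simp⟩
    | mul x y hx hy ihx ihy =>
        obtain ⟨a1, c1, h1⟩ := ihx
        obtain ⟨a2, c2, h2⟩ := ihy
        refine ⟨a2 + a1, fun m => xor (c1 (m - a2)) (c2 m), fun m ε => ?_⟩
        rw [Equiv.Perm.mul_apply, h2, h1]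
        rw [Bool.xor_assoc]
        congr 1
        ring
    | inv x hx ihx =>
        obtain ⟨a, c, hc⟩ := ihx
        refine ⟨-a, fun m => c (m + a), fun m ε => ?_⟩
        have : x ((↑(m + a) : OnePoint ℤ), xor (c (m + a)) ε)
            = ((m : OnePoint ℤ), ε) := by
          rw [hc]
          simp [← Bool.xor_assoc]
        rw [← this, ← Equiv.Perm.mul_apply, inv_mul_cancel, Equiv.Perm.one_apply]
        congr 1
        norm_num
  obtain ⟨a, c, hc⟩ := key
  have ha : lampAg g = a := by
    unfold lampAg
    rw [hc 0 true]
    simp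
  have hcm : lampCg g m = c m := by
    unfold lampCg
    rw [hc m true]
    simp
  rw [hc m ε, ha, hcm]

lemma lampAg_mul_sigma_pow {g : Equiv.Perm LampX} (hg : g ∈ lampG) (j : ℕ) :
    lampAg (g * lampSigma ^ j) = lampAg g + j := by
  unfold lampAg
  rw [Equiv.Perm.mul_apply]
  have hs : (lampSigma ^ j) (((0 : ℤ) : OnePoint ℤ), true)
      = ((↑(0 - (j : ℤ)) : OnePoint ℤ), true) := by
    rw [← zpow_natCast, lampSigma_zpow_apply]
  rw [hs, lampG_norm hg]
  simp only [lampToZ_coe]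
  unfold lampAg
  ring

lemma lampCg_mul_fn {g : Equiv.Perm LampX} (hg : g ∈ lampG) (m : ℤ) :
    lampCg (g * lampfn m) m = ! lampCg g m := by
  have h1 : (g * lampfn m) ((m : OnePoint ℤ), true)
      = ((↑(m - lampAg g) : OnePoint ℤ), xor (lampCg g m) false) := by
    rw [Equiv.Perm.mul_apply, lampfn_apply, lampG_norm hg]
    simp
  unfold lampCg
  rw [h1]
  rw [lampG_norm hg]
  simp

/-- Generic counting lemma: an injective self-map changing predicate `p` into `q`
moves at most `|F·φ ∆ F|` elements outside the `q`-part of `F`. -/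
lemma card_filter_le_aux [DecidableEq (Equiv.Perm LampX)]
    (F : Finset (Equiv.Perm LampX)) (φ : Equiv.Perm LampX → Equiv.Perm LampX)
    (hinj : Function.Injective φ)
    (p q : Equiv.Perm LampX → Prop) [DecidablePred p] [DecidablePred q]
    (hpq : ∀ g ∈ F, p g → q (φ g)) :
    (F.filter p).card ≤ (F.filter q).card + ((F.image φ) ∆ F).card := by
  have step1 : (F.filter p).card ≤ ((F.image φ).filter q).card := by
    apply Finset.card_le_card_of_injOn φ
    · intro g hgmem
      rw [Finset.mem_coe, Finset.mem_filter] at hgmem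
      rw [Finset.mem_coe, Finset.mem_filter]
      exact ⟨Finset.mem_image_of_mem φ hgmem.1, hpq g hgmem.1 hgmem.2⟩
    · exact Function.Injective.injOn hinj
  have step2 : (F.image φ).filter q ⊆ (F.filter q) ∪ ((F.image φ) \ F) := by
    intro y hy
    rw [Finset.mem_filter] at hy
    rw [Finset.mem_union]
    by_cases hyF : y ∈ F
    · exact Or.inl (Finset.mem_filter.mpr ⟨hyF, hy.2⟩)
    · exact Or.inr (Finset.mem_sdiff.mpr ⟨hy.1, hyF⟩)
  have step3 : ((F.image φ) \ F) ⊆ (F.image φ) ∆ F := by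
    rw [symmDiff_def]
    exact Finset.subset_union_left
  calc (F.filter p).card ≤ ((F.image φ).filter q).card := step1
    _ ≤ ((F.filter q) ∪ ((F.image φ) \ F)).card := Finset.card_le_card step2
    _ ≤ (F.filter q).card + ((F.image φ) \ F).card := Finset.card_union_le _ _
    _ ≤ (F.filter q).card + ((F.image φ) ∆ F).card := by
        exact Nat.add_le_add_left (Finset.card_le_card step3) _

lemma tendsto_zero_of_abs_le (f : ℕ → ℝ)
    (h : ∀ ε : ℝ, 0 < ε → ∀ᶠ n in atTop, |f n| ≤ ε) :
    Tendsto f atTop (𝓝 0) := by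
  rw [Metric.tendsto_atTop]
  intro ε hε
  obtain ⟨N, hN⟩ := (Filter.eventually_atTop.mp (h (ε / 2) (half_pos hε)))
  refine ⟨N, fun n hn => ?_⟩
  rw [Real.dist_eq, sub_zero]
  exact lt_of_le_of_lt (hN n hn) (half_lt_self hε)

/-- For the Lamplighter group action on `X = (ℤ∪{∞}) × {0,1}` and any right Følner
sequence `(F_n')` in `G`, the empirical measures `μ_n^x = (1/|F_n'|) Σ_{g∈F_n'} δ_{gx}`
converge weak* to `(1/2)δ_{(∞,1)} + (1/2)δ_{(∞,0)}` for every `x` other than the two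
fixed points `(∞,1)` and `(∞,0)`. -/
theorem lamplighter_right_Folner_averages :
    ∀ F : ℕ → Finset (Equiv.Perm LampX),
    haveI : DecidableEq (Equiv.Perm LampX) := Classical.decEq _
    (∀ n, (F n).Nonempty) →
    (∀ n, ∀ g ∈ F n, g ∈ lampG) →
    (∀ g ∈ lampG, Tendsto
      (fun n => ((((F n).image (· * g)) ∆ (F n)).card : ℝ) / (F n).card)
      atTop (𝓝 0)) →
    ∀ x : LampX, x ≠ (OnePoint.infty, true) → x ≠ (OnePoint.infty, false) →
    ∀ h : C(LampX, ℝ), Tendsto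
      (fun n => (∑ g ∈ F n, h (g x)) / (F n).card)
      atTop (𝓝 ((1/2) * h (OnePoint.infty, true) + (1/2) * h (OnePoint.infty, false))) := by
  intro F hne hmem hFol x hx1 hx0 h
  letI : DecidableEq (Equiv.Perm LampX) := Classical.decEq _
  obtain ⟨m₀, ε₀, rfl⟩ : ∃ (m₀ : ℤ) (ε₀ : Bool), x = ((m₀ : OnePoint ℤ), ε₀) := by
    obtain ⟨s, b⟩ := x
    rcases s with _ | m
    · cases b
      · exact absurd rfl hx0
      · exact absurd rfl hx1
    · exact ⟨m, b, rfl⟩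
  set K : ℕ → ℝ := fun n => ((F n).card : ℝ) with hKdef
  have hK : ∀ n, 0 < K n := fun n => by
    simp only [hKdef]
    exact_mod_cast Finset.card_pos.mpr (hne n)
  have hK0 : ∀ n, K n ≠ 0 := fun n => ne_of_gt (hK n)
  -- the fraction of elements with a fixed value of `lampAg` tends to `0`
  have L_Ag : ∀ t : ℤ, Tendsto
      (fun n => (((F n).filter (fun g => lampAg g = t)).card : ℝ) / K n) atTop (𝓝 0) := by
    intro t
    apply tendsto_zero_of_abs_le
    intro ε hε
    obtain ⟨N₀, hN₀⟩ := exists_nat_gt (2 / ε)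
    set N := N₀ + 1 with hNdef
    have hNpos : (0 : ℝ) < (N : ℝ) := by positivity
    have hN2 : 2 / ε ≤ (N : ℝ) := by rw [hNdef]; push_cast; linarith
    have hNinv : (1 : ℝ) / N ≤ ε / 2 := by
      rw [div_le_div_iff₀ hNpos (by norm_num : (0:ℝ) < 2)]
      have h2N : 2 ≤ ε * N := by
        have := (div_le_iff₀ hε).mp hN2
        linarith
      linarith
    have cnt_bound : ∀ n, (N : ℝ) * (((F n).filter (fun g => lampAg g = t)).card : ℝ)
        ≤ K n + ∑ j ∈ Finset.range N,
            (((((F n).image (· * lampSigma ^ j)) ∆ (F n)).card : ℕ) : ℝ) := by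
      intro n
      have hstep : ∀ j : ℕ, ((F n).filter (fun g => lampAg g = t)).card
          ≤ ((F n).filter (fun g => lampAg g = t + j)).card
            + ((((F n).image (· * lampSigma ^ j)) ∆ (F n)).card) := by
        intro j
        apply card_filter_le_aux (F n) (· * lampSigma ^ j) (mul_left_injective _)
        intro g hg hp
        rw [lampAg_mul_sigma_pow (hmem n g hg), hp]
      have hdisj : ∑ j ∈ Finset.range N, ((F n).filter (fun g => lampAg g = t + j)).card
          ≤ (F n).card := by
        rw [← Finset.card_biUnion]
        · apply Finset.card_le_card
          intro g hg
          rw [Finset.mem_biUnion] at hg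
          obtain ⟨j, _, hj⟩ := hg
          exact (Finset.mem_filter.mp hj).1
        · intro i _ j _ hij
          rw [Function.onFun_apply, Finset.disjoint_left]
          intro g hgi hgj
          rw [Finset.mem_filter] at hgi hgj
          have e1 := hgi.2
          have e2 := hgj.2
          apply hij
          omega
      have hnat : N * ((F n).filter (fun g => lampAg g = t)).card
          ≤ (F n).card + ∑ j ∈ Finset.range N,
              ((((F n).image (· * lampSigma ^ j)) ∆ (F n)).card) := by
        calc N * ((F n).filter (fun g => lampAg g = t)).card
            = ∑ _j ∈ Finset.range N, ((F n).filter (fun g => lampAg g = t)).card := by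
              rw [Finset.sum_const, Finset.card_range, smul_eq_mul]
          _ ≤ ∑ j ∈ Finset.range N, (((F n).filter (fun g => lampAg g = t + j)).card
                + ((((F n).image (· * lampSigma ^ j)) ∆ (F n)).card)) :=
              Finset.sum_le_sum (fun j _ => hstep j)
          _ = (∑ j ∈ Finset.range N, ((F n).filter (fun g => lampAg g = t + j)).card)
                + ∑ j ∈ Finset.range N,
                    ((((F n).image (· * lampSigma ^ j)) ∆ (F n)).card) :=
              Finset.sum_add_distrib
          _ ≤ _ := Nat.add_le_add_right hdisj _
      have := (Nat.cast_le (α := ℝ)).mpr hnat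
      push_cast at this ⊢
      linarith
    have hsum0 : Tendsto (fun n => ∑ j ∈ Finset.range N,
        (((((F n).image (· * lampSigma ^ j)) ∆ (F n)).card : ℕ) : ℝ) / K n) atTop (𝓝 0) := by
      have := tendsto_finset_sum (Finset.range N)
        (fun j _ => hFol (lampSigma ^ j) (lampSigma_pow_mem j))
      simpa using this
    filter_upwards [hsum0.eventually (gt_mem_nhds (half_pos hε))] with n hn
    set C := (((F n).filter (fun g => lampAg g = t)).card : ℝ) with hCdef
    set S := ∑ j ∈ Finset.range N,
        (((((F n).image (· * lampSigma ^ j)) ∆ (F n)).card : ℕ) : ℝ) with hSdef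
    have hC0 : 0 ≤ C := Nat.cast_nonneg _
    have hS0 : 0 ≤ S := Finset.sum_nonneg (fun j _ => Nat.cast_nonneg _)
    have hSn : S / K n < ε / 2 := by
      rw [← Finset.sum_div] at hn
      exact hn
    have hS' : S ≤ ε / 2 * K n := by
      rw [div_lt_iff₀ (hK n)] at hSn
      linarith
    have hq : 1 ≤ ε / 2 * N := by
      rw [div_le_iff₀ hNpos] at hNinv
      linarith
    have hkNk : K n ≤ ε / 2 * N * K n := le_mul_of_one_le_left (hK n).le hq
    have hN1 : (1:ℝ) ≤ N := by exact_mod_cast Nat.one_le_iff_ne_zero.mpr (by omega)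
    have hSN : S ≤ ε / 2 * (N * K n) := by
      have hx1 : K n ≤ N * K n := le_mul_of_one_le_left (hK n).le hN1
      have hx2 : ε / 2 * K n ≤ ε / 2 * (N * K n) :=
        mul_le_mul_of_nonneg_left hx1 (half_pos hε).le
      linarith
    have hmain : (N : ℝ) * C ≤ (N : ℝ) * (ε * K n) := by
      calc (N : ℝ) * C ≤ K n + S := cnt_bound n
        _ ≤ ε / 2 * N * K n + ε / 2 * (N * K n) := by linarith
        _ = (N : ℝ) * (ε * K n) := by ring
    have hCle : C ≤ ε * K n := le_of_mul_le_mul_left hmain hNpos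
    rw [abs_of_nonneg (div_nonneg hC0 (hK n).le), div_le_iff₀ (hK n)]
    linarith
  -- the fraction of elements with `lampAg` in a fixed finite set tends to `0`
  have L_AgT : ∀ T : Finset ℤ, Tendsto
      (fun n => (((F n).filter (fun g => lampAg g ∈ T)).card : ℝ) / K n) atTop (𝓝 0) := by
    intro T
    have hb : ∀ n, (((F n).filter (fun g => lampAg g ∈ T)).card : ℝ) / K n
        ≤ ∑ t ∈ T, (((F n).filter (fun g => lampAg g = t)).card : ℝ) / K n := by
      intro n
      rw [← Finset.sum_div]
      have hsub : (F n).filter (fun g => lampAg g ∈ T)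
          ⊆ T.biUnion (fun t => (F n).filter (fun g => lampAg g = t)) := by
        intro g hg
        rw [Finset.mem_filter] at hg
        exact Finset.mem_biUnion.mpr ⟨lampAg g, hg.2, Finset.mem_filter.mpr ⟨hg.1, rfl⟩⟩
      have hcard : (((F n).filter (fun g => lampAg g ∈ T)).card : ℝ)
          ≤ ∑ t ∈ T, (((F n).filter (fun g => lampAg g = t)).card : ℝ) := by
        have h1 := Finset.card_le_card hsub
        have h2 := Finset.card_biUnion_le (s := T)
          (t := fun t => (F n).filter (fun g => lampAg g = t))
        have := le_trans h1 h2
        exact_mod_cast this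
      exact (div_le_div_iff_of_pos_right (hK n)).mpr hcard
    have hsum : Tendsto (fun n => ∑ t ∈ T,
        (((F n).filter (fun g => lampAg g = t)).card : ℝ) / K n) atTop (𝓝 0) := by
      have := tendsto_finset_sum T (fun t _ => L_Ag t)
      simpa using this
    exact squeeze_zero (fun n => div_nonneg (Nat.cast_nonneg _) (hK n).le) hb hsum
  -- the fraction of elements with a given flip value at `m₀` tends to `1/2`
  have L_Cg : ∀ b : Bool, Tendsto
      (fun n => (((F n).filter (fun g => lampCg g m₀ = b)).card : ℝ) / K n) atTop (𝓝 (1/2)) := by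
    intro b
    have hD := hFol (lampfn m₀) (lampfn_mem m₀)
    have hbound : ∀ n, |(((F n).filter (fun g => lampCg g m₀ = b)).card : ℝ) / K n - 1/2|
        ≤ ((((F n).image (· * lampfn m₀)) ∆ (F n)).card : ℝ) / K n := by
      intro n
      set p := (((F n).filter (fun g => lampCg g m₀ = b)).card : ℝ) with hpdef
      set q := (((F n).filter (fun g => lampCg g m₀ = !b)).card : ℝ) with hqdef
      set D := ((((F n).image (· * lampfn m₀)) ∆ (F n)).card : ℝ) with hDdef
      have hp0 : 0 ≤ p := Nat.cast_nonneg _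
      have hq0 : 0 ≤ q := Nat.cast_nonneg _
      have hD0 : 0 ≤ D := Nat.cast_nonneg _
      have hpq : p + q = K n := by
        have h1 := Finset.card_filter_add_card_filter_not
          (s := F n) (p := fun g => lampCg g m₀ = b)
        have hfe : (F n).filter (fun g => ¬ (lampCg g m₀ = b))
            = (F n).filter (fun g => lampCg g m₀ = !b) := by
          apply Finset.filter_congr
          intro g _
          cases hcg : lampCg g m₀ <;> cases b <;> simp
        rw [hfe] at h1
        simp only [hpdef, hqdef, hKdef]
        exact_mod_cast h1
      have h1 : p ≤ q + D := by
        have := card_filter_le_aux (F n) (· * lampfn m₀) (mul_left_injective _)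
          (fun g => lampCg g m₀ = b) (fun g => lampCg g m₀ = !b)
          (fun g hg hp => by
            show lampCg (g * lampfn m₀) m₀ = !b
            rw [lampCg_mul_fn (hmem n g hg)]
            rw [show lampCg g m₀ = b from hp])
        simp only [hpdef, hqdef, hDdef]
        exact_mod_cast this
      have h2 : q ≤ p + D := by
        have := card_filter_le_aux (F n) (· * lampfn m₀) (mul_left_injective _)
          (fun g => lampCg g m₀ = !b) (fun g => lampCg g m₀ = b)
          (fun g hg hp => by
            show lampCg (g * lampfn m₀) m₀ = b
            rw [lampCg_mul_fn (hmem n g hg)]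
            rw [show lampCg g m₀ = !b from hp, Bool.not_not])
        simp only [hpdef, hqdef, hDdef]
        exact_mod_cast this
      have e1 : p / K n - 1/2 = (p - q) / (2 * K n) := by
        rw [div_sub_div _ _ (hK0 n) two_ne_zero, div_eq_div_iff (mul_ne_zero (hK0 n) two_ne_zero) (mul_ne_zero two_ne_zero (hK0 n))]
        linear_combination (2 * K n) * hpq
      rw [e1, abs_div, abs_of_pos (by linarith [hK n] : (0:ℝ) < 2 * K n)]
      have habs : |p - q| ≤ D := abs_sub_le_iff.mpr ⟨by linarith, by linarith⟩
      calc |p - q| / (2 * K n) ≤ D / (2 * K n) :=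
            (div_le_div_iff_of_pos_right (by linarith [hK n] : (0:ℝ) < 2 * K n)).mpr habs
        _ ≤ D / K n := by
            apply div_le_div_of_nonneg_left hD0 (hK n)
            linarith [hK n]
    have hD' : Tendsto (fun n =>
        ((((F n).image (· * lampfn m₀)) ∆ (F n)).card : ℝ) / K n) atTop (𝓝 0) := hD
    have h0 := squeeze_zero_norm (fun n => by
      rw [Real.norm_eq_abs]; exact hbound n) hD'
    have h1 := h0.add (tendsto_const_nhds (x := (1/2 : ℝ)) (f := atTop))
    simp only [zero_add] at h1
    refine h1.congr (fun n => by ring)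
  -- translate to the actual filters appearing in the sums
  have hgx : ∀ n, ∀ g ∈ F n, g ((m₀ : OnePoint ℤ), ε₀)
      = ((↑(m₀ - lampAg g) : OnePoint ℤ), xor (lampCg g m₀) ε₀) :=
    fun n g hg => lampG_norm (hmem n g hg) m₀ ε₀
  have LP : Tendsto (fun n =>
      (((F n).filter (fun g => (g ((m₀ : OnePoint ℤ), ε₀)).2 = true)).card : ℝ) / K n)
      atTop (𝓝 (1/2)) := by
    refine (L_Cg (!ε₀)).congr (fun n => ?_)
    have heq : (F n).filter (fun g => lampCg g m₀ = !ε₀)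
        = (F n).filter (fun g => (g ((m₀ : OnePoint ℤ), ε₀)).2 = true) := by
      apply Finset.filter_congr
      intro g hg
      rw [hgx n g hg]
      cases hcg : lampCg g m₀ <;> cases ε₀ <;> simp
    rw [heq]
  have LQ : Tendsto (fun n =>
      (((F n).filter (fun g => ¬ ((g ((m₀ : OnePoint ℤ), ε₀)).2 = true))).card : ℝ) / K n)
      atTop (𝓝 (1/2)) := by
    refine (L_Cg ε₀).congr (fun n => ?_)
    have heq : (F n).filter (fun g => lampCg g m₀ = ε₀)
        = (F n).filter (fun g => ¬ ((g ((m₀ : OnePoint ℤ), ε₀)).2 = true)) := by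
      apply Finset.filter_congr
      intro g hg
      rw [hgx n g hg]
      cases hcg : lampCg g m₀ <;> cases ε₀ <;> simp
    rw [heq]
  -- the error term tends to 0
  have Le : Tendsto (fun n => (∑ g ∈ F n,
      (h (g ((m₀ : OnePoint ℤ), ε₀)) - h (OnePoint.infty, (g ((m₀ : OnePoint ℤ), ε₀)).2))) / K n)
      atTop (𝓝 0) := by
    apply tendsto_zero_of_abs_le
    intro ε hε
    obtain ⟨B, hB⟩ : ∃ B : ℝ, ∀ y : LampX, |h y| ≤ B := by
      obtain ⟨B, hB⟩ := IsCompact.exists_bound_of_continuousOn isCompact_univ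
        h.continuous.continuousOn
      exact ⟨B, fun y => by simpa using hB y (Set.mem_univ y)⟩
    have hB0 : 0 ≤ B := le_trans (abs_nonneg _) (hB (OnePoint.infty, true))
    have hcoe : Tendsto ((↑) : ℤ → OnePoint ℤ) cofinite (𝓝 OnePoint.infty) := by
      rw [← Filter.cocompact_eq_cofinite, ← Filter.coclosedCompact_eq_cocompact]
      exact OnePoint.tendsto_coe_infty
    have hev : ∀ b : Bool, ∀ᶠ s : ℤ in cofinite,
        |h ((s : OnePoint ℤ), b) - h (OnePoint.infty, b)| ≤ ε/2 := by
      intro b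
      have ht : Tendsto (fun s : ℤ => h ((s : OnePoint ℤ), b)) cofinite
          (𝓝 (h (OnePoint.infty, b))) :=
        (h.continuous.tendsto (OnePoint.infty, b)).comp
          (hcoe.prodMk_nhds tendsto_const_nhds)
      have hcb : ∀ᶠ y in 𝓝 (h (OnePoint.infty, b)), dist y (h (OnePoint.infty, b)) ≤ ε/2 :=
        Filter.eventually_of_mem (Metric.closedBall_mem_nhds _ (half_pos hε))
          (fun y hy => Metric.mem_closedBall.mp hy)
      filter_upwards [ht.eventually hcb] with s hs
      rwa [Real.dist_eq] at hs
    have hfin : {s : ℤ | ¬ (|h ((s : OnePoint ℤ), true) - h (OnePoint.infty, true)| ≤ ε/2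
        ∧ |h ((s : OnePoint ℤ), false) - h (OnePoint.infty, false)| ≤ ε/2)}.Finite := by
      have := (hev true).and (hev false)
      rwa [Filter.eventually_cofinite] at this
    set Kset : Finset ℤ := hfin.toFinset with hKsetdef
    set T0 : Finset ℤ := Kset.image (fun s => m₀ - s) with hT0def
    have hbp : (0:ℝ) < 2*B+1 := by linarith
    have hev2 : ∀ᶠ n in atTop,
        (((F n).filter (fun g => lampAg g ∈ T0)).card : ℝ) / K n < ε/(2*(2*B+1)) :=
      (L_AgT T0).eventually (gt_mem_nhds (by positivity))
    filter_upwards [hev2] with n hn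
    set ba := (((F n).filter (fun g => lampAg g ∈ T0)).card : ℝ) with hbadef
    have hba0 : 0 ≤ ba := Nat.cast_nonneg _
    -- pointwise bounds
    have hgood : ∀ g ∈ F n, lampAg g ∉ T0 →
        |h (g ((m₀ : OnePoint ℤ), ε₀)) - h (OnePoint.infty, (g ((m₀ : OnePoint ℤ), ε₀)).2)|
          ≤ ε/2 := by
      intro g hg hnotin
      have hsK : (m₀ - lampAg g) ∉ Kset := by
        intro hmem2
        exact hnotin (Finset.mem_image.mpr ⟨m₀ - lampAg g, hmem2, by ring⟩)
      have hsK2 : |h ((↑(m₀ - lampAg g) : OnePoint ℤ), true) - h (OnePoint.infty, true)| ≤ ε/2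
          ∧ |h ((↑(m₀ - lampAg g) : OnePoint ℤ), false) - h (OnePoint.infty, false)| ≤ ε/2 := by
        by_contra hcon
        exact hsK (by rw [hKsetdef, Set.Finite.mem_toFinset]; exact hcon)
      rw [hgx n g hg]
      cases xor (lampCg g m₀) ε₀
      · exact hsK2.2
      · exact hsK2.1
    have hbad : ∀ g ∈ F n,
        |h (g ((m₀ : OnePoint ℤ), ε₀)) - h (OnePoint.infty, (g ((m₀ : OnePoint ℤ), ε₀)).2)|
          ≤ 2*B+1 := by
      intro g hg
      have := abs_sub (h (g ((m₀ : OnePoint ℤ), ε₀)))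
        (h (OnePoint.infty, (g ((m₀ : OnePoint ℤ), ε₀)).2))
      have b1 := hB (g ((m₀ : OnePoint ℤ), ε₀))
      have b2 := hB (OnePoint.infty, (g ((m₀ : OnePoint ℤ), ε₀)).2)
      linarith
    -- sum bound
    have hsum : |∑ g ∈ F n,
        (h (g ((m₀ : OnePoint ℤ), ε₀)) - h (OnePoint.infty, (g ((m₀ : OnePoint ℤ), ε₀)).2))|
          ≤ ba * (2*B+1) + K n * (ε/2) := by
      have h1 := Finset.abs_sum_le_sum_abs
        (fun g => h (g ((m₀ : OnePoint ℤ), ε₀))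
          - h (OnePoint.infty, (g ((m₀ : OnePoint ℤ), ε₀)).2)) (F n)
      have h2 : ∑ g ∈ F n,
          |h (g ((m₀ : OnePoint ℤ), ε₀)) - h (OnePoint.infty, (g ((m₀ : OnePoint ℤ), ε₀)).2)|
          = (∑ g ∈ (F n).filter (fun g => lampAg g ∈ T0),
              |h (g ((m₀ : OnePoint ℤ), ε₀)) - h (OnePoint.infty, (g ((m₀ : OnePoint ℤ), ε₀)).2)|)
            + ∑ g ∈ (F n).filter (fun g => ¬ (lampAg g ∈ T0)),
              |h (g ((m₀ : OnePoint ℤ), ε₀)) - h (OnePoint.infty, (g ((m₀ : OnePoint ℤ), ε₀)).2)| :=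
        (Finset.sum_filter_add_sum_filter_not (F n) (fun g => lampAg g ∈ T0) _).symm
      have h3 : ∑ g ∈ (F n).filter (fun g => lampAg g ∈ T0),
          |h (g ((m₀ : OnePoint ℤ), ε₀)) - h (OnePoint.infty, (g ((m₀ : OnePoint ℤ), ε₀)).2)|
          ≤ ba * (2*B+1) := by
        calc _ ≤ ∑ _g ∈ (F n).filter (fun g => lampAg g ∈ T0), (2*B+1) :=
              Finset.sum_le_sum (fun g hg =>
                hbad g (Finset.mem_filter.mp hg).1)
          _ = ba * (2*B+1) := by
              rw [Finset.sum_const, nsmul_eq_mul, hbadef]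
      have h4 : ∑ g ∈ (F n).filter (fun g => ¬ (lampAg g ∈ T0)),
          |h (g ((m₀ : OnePoint ℤ), ε₀)) - h (OnePoint.infty, (g ((m₀ : OnePoint ℤ), ε₀)).2)|
          ≤ K n * (ε/2) := by
        calc _ ≤ ∑ _g ∈ (F n).filter (fun g => ¬ (lampAg g ∈ T0)), (ε/2) :=
              Finset.sum_le_sum (fun g hg => by
                have hg' := Finset.mem_filter.mp hg
                exact hgood g hg'.1 hg'.2)
          _ = (((F n).filter (fun g => ¬ (lampAg g ∈ T0))).card : ℝ) * (ε/2) := by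
              rw [Finset.sum_const, nsmul_eq_mul]
          _ ≤ K n * (ε/2) := by
              apply mul_le_mul_of_nonneg_right _ (half_pos hε).le
              simp only [hKdef]
              exact_mod_cast Finset.card_le_card (Finset.filter_subset _ _)
      linarith
    -- finish
    have hn' : ba < ε/(2*(2*B+1)) * K n := (div_lt_iff₀ (hK n)).mp hn
    have hba2 : ba * (2*B+1) ≤ ε/2 * K n := by
      have heq : ε/(2*(2*B+1)) * K n * (2*B+1) = ε/2 * K n := by
        field_simp
      nlinarith [hK n]
    rw [abs_div, abs_of_pos (hK n), div_le_iff₀ (hK n)]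
    calc |∑ g ∈ F n, (h (g ((m₀ : OnePoint ℤ), ε₀))
          - h (OnePoint.infty, (g ((m₀ : OnePoint ℤ), ε₀)).2))|
        ≤ ba * (2*B+1) + K n * (ε/2) := hsum
      _ ≤ ε/2 * K n + K n * (ε/2) := by linarith
      _ = ε * K n := by ring
  -- exact decomposition of the averages
  have main_id : ∀ n, (∑ g ∈ F n, h (g ((m₀ : OnePoint ℤ), ε₀))) / K n
      = (((F n).filter (fun g => (g ((m₀ : OnePoint ℤ), ε₀)).2 = true)).card : ℝ) / K n
          * h (OnePoint.infty, true)
        + (((F n).filter (fun g => ¬ ((g ((m₀ : OnePoint ℤ), ε₀)).2 = true))).card : ℝ) / K n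
          * h (OnePoint.infty, false)
        + (∑ g ∈ F n, (h (g ((m₀ : OnePoint ℤ), ε₀))
            - h (OnePoint.infty, (g ((m₀ : OnePoint ℤ), ε₀)).2))) / K n := by
    intro n
    have split : ∑ g ∈ F n, h (OnePoint.infty, (g ((m₀ : OnePoint ℤ), ε₀)).2)
        = (((F n).filter (fun g => (g ((m₀ : OnePoint ℤ), ε₀)).2 = true)).card : ℝ)
            * h (OnePoint.infty, true)
          + (((F n).filter (fun g => ¬ ((g ((m₀ : OnePoint ℤ), ε₀)).2 = true))).card : ℝ)
            * h (OnePoint.infty, false) := by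
      rw [← Finset.sum_filter_add_sum_filter_not (F n)
        (fun g => (g ((m₀ : OnePoint ℤ), ε₀)).2 = true)]
      congr 1
      · rw [Finset.sum_congr rfl (fun g hg => by
          rw [(Finset.mem_filter.mp hg).2]), Finset.sum_const, nsmul_eq_mul]
      · rw [Finset.sum_congr rfl (fun g hg => by
          rw [Bool.not_eq_true _ |>.mp ((Finset.mem_filter.mp hg).2)]),
          Finset.sum_const, nsmul_eq_mul]
    have tele : ∑ g ∈ F n, h (g ((m₀ : OnePoint ℤ), ε₀))
        = (∑ g ∈ F n, h (OnePoint.infty, (g ((m₀ : OnePoint ℤ), ε₀)).2))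
          + ∑ g ∈ F n, (h (g ((m₀ : OnePoint ℤ), ε₀))
            - h (OnePoint.infty, (g ((m₀ : OnePoint ℤ), ε₀)).2)) := by
      rw [← Finset.sum_add_distrib]
      exact Finset.sum_congr rfl (fun g _ => by ring)
    rw [tele, split]
    ring
  -- assemble
  have final := ((LP.mul_const (h (OnePoint.infty, true))).add
    (LQ.mul_const (h (OnePoint.infty, false)))).add Le
  simp only [add_zero] at final
  exact (final.congr (fun n => (main_id n).symm)).congr' (by rfl)

end
end
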